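/- Let G be a (c−1)-atom and T_c(G) the graph on the maximal c-atoms and minimal clique separators of size at most c of G (edges given by inclusion C ⊆ A). If A₁, C₁, A₂, …, C_{t−1}, A_t is a path in T_c(G) alternating between maximal c-atoms and separators, then for every i ≥ 2 the atom A_i contains no vertex of A₁ \ A₂. Consequently T_c(G) is acyclic. -/

import Mathlib

variable {V : Type*}

/-- `C` separates `x` and `y` in `G`: neither endpoint is in `C` and every walk
from `x` to `y` meets `C`. -/
def Separates (G : SimpleGraph V) (C : Set V) (x y : V) : Prop :=
  x ∉ C ∧ y ∉ C ∧ ∀ p : G.Walk x y, ∃ z ∈ C, z ∈ p.support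

/-- `x` and `y` are `c`-inseparable in `G`: no clique of size at most `c` separates them. -/
def CInsep (G : SimpleGraph V) (c : ℕ) (x y : V) : Prop :=
  ∀ C : Set V, G.IsClique C → C.ncard ≤ c → ¬ Separates G C x y

/-- A set is `c`-inseparable if all its pairs of vertices are. -/
def InsepSet (G : SimpleGraph V) (c : ℕ) (A : Set V) : Prop :=
  ∀ x ∈ A, ∀ y ∈ A, CInsep G c x y

/-- Maximal `c`-inseparable set. -/
def MaxInsepSet (G : SimpleGraph V) (c : ℕ) (A : Set V) : Prop :=
  InsepSet G c A ∧ ∀ B, A ⊆ B → InsepSet G c B → B = A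

/-- `C` separates `x` and `y` within the induced subgraph `G[A]`. -/
def SeparatesWithin (G : SimpleGraph V) (A C : Set V) (x y : V) : Prop :=
  x ∈ A \ C ∧ y ∈ A \ C ∧
    ∀ p : G.Walk x y, (∀ z ∈ p.support, z ∈ A) → ∃ z ∈ C, z ∈ p.support

/-- `G[A]` is a `c`-atom: it has no clique separator of size at most `c`. -/
def AtomWithin (G : SimpleGraph V) (c : ℕ) (A : Set V) : Prop :=
  ¬ ∃ C : Set V, C ⊆ A ∧ G.IsClique C ∧ C.ncard ≤ c ∧ ∃ x y, SeparatesWithin G A C x y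

/-- `G[A]` is a maximal `c`-atom of `G`. -/
def MaxAtom (G : SimpleGraph V) (c : ℕ) (A : Set V) : Prop :=
  AtomWithin G c A ∧ ∀ B, A ⊆ B → AtomWithin G c B → B = A

/-- `C` is an inclusion-wise minimal clique separator of size at most `c`:
a clique of size at most `c` that separates some pair of vertices and is
inclusion-minimal among cliques separating that pair. -/
def MinCliqueSep (G : SimpleGraph V) (c : ℕ) (C : Set V) : Prop :=
  G.IsClique C ∧ C.ncard ≤ c ∧
    ∃ x y : V, Separates G C x y ∧
      ∀ C' ⊆ C, G.IsClique C' → Separates G C' x y → C' = C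

/-- Nodes of `T_c(G)` corresponding to maximal `c`-atoms (equivalently, maximal
`c`-inseparable vertex sets). -/
def AtomNode (G : SimpleGraph V) (c : ℕ) : Type _ := {A : Set V // MaxInsepSet G c A}

/-- Nodes of `T_c(G)` corresponding to minimal clique separators of size at most `c`. -/
def SepNode (G : SimpleGraph V) (c : ℕ) : Type _ := {C : Set V // MinCliqueSep G c C}

/-- The bipartite incidence graph `T_c(G)`: a maximal `c`-atom `A` is joined to a
minimal clique separator `C` exactly when `C ⊆ A`. -/
def TcGraph (G : SimpleGraph V) (c : ℕ) : SimpleGraph (AtomNode G c ⊕ SepNode G c) where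
  Adj n m :=
    (∃ (A : AtomNode G c) (C : SepNode G c),
        n = Sum.inl A ∧ m = Sum.inr C ∧ C.val ⊆ A.val) ∨
    (∃ (A : AtomNode G c) (C : SepNode G c),
        n = Sum.inr C ∧ m = Sum.inl A ∧ C.val ⊆ A.val)
  symm := by
    constructor
    rintro n m (⟨A, C, rfl, rfl, h⟩ | ⟨A, C, rfl, rfl, h⟩)
    · exact Or.inr ⟨A, C, rfl, rfl, h⟩
    · exact Or.inl ⟨A, C, rfl, rfl, h⟩
  loopless := by
    constructor
    rintro n (⟨A, C, rfl, h, -⟩ | ⟨A, C, rfl, h, -⟩) <;> exact absurd h (by simp)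

/-- `G` has no clique separator of size at most `c - 1`. -/
def NoSmallCliqueSep (G : SimpleGraph V) (c : ℕ) : Prop :=
  ∀ C : Set V, G.IsClique C → C.ncard ≤ c - 1 → ¬ ∃ x y, Separates G C x y

/-! ### Auxiliary lemmas -/

lemma sep_symm {G : SimpleGraph V} {C : Set V} {x y : V} (h : Separates G C x y) :
    Separates G C y x := by
  refine ⟨h.2.1, h.1, fun p => ?_⟩
  obtain ⟨z, hz, hzs⟩ := h.2.2 p.reverse
  exact ⟨z, hz, by rwa [SimpleGraph.Walk.support_reverse, List.mem_reverse] at hzs⟩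

/-- Within a `c`-inseparable set, any two vertices outside a small clique `C` are
joined by a walk avoiding `C`. -/
lemma insep_reach {G : SimpleGraph V} {c : ℕ} {S C : Set V} (hS : InsepSet G c S)
    (hCq : G.IsClique C) (hCc : C.ncard ≤ c) {u v : V} (hu : u ∈ S) (hv : v ∈ S)
    (hu' : u ∉ C) (hv' : v ∉ C) : ∃ p : G.Walk u v, ∀ z ∈ C, z ∉ p.support := by
  by_contra h
  push_neg at h
  exact hS u hu v hv C hCq hCc ⟨hu', hv', h⟩

/-- A minimal clique separator has size exactly `c` when `G` has no clique
separator of size `≤ c - 1`. -/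
lemma minsep_ncard {G : SimpleGraph V} {c : ℕ} (hc : 1 ≤ c)
    (hatom : NoSmallCliqueSep G c) {C : Set V} (hC : MinCliqueSep G c C) :
    C.ncard = c := by
  obtain ⟨hq, hle, x, y, hsep, -⟩ := hC
  by_contra hne
  exact hatom C hq (by omega) ⟨x, y, hsep⟩

/-- Key lemma: if `A ≠ B` are maximal `c`-inseparable sets both containing the minimal
clique separator `C`, then no walk avoiding `C` joins `A \ C` to `B \ C`. -/
lemma sidesep [Fintype V] {G : SimpleGraph V} {c : ℕ} (hc : 1 ≤ c)
    (hatom : NoSmallCliqueSep G c) {A B C : Set V}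
    (hA : MaxInsepSet G c A) (hB : MaxInsepSet G c B) (hC : MinCliqueSep G c C)
    (hAB : A ≠ B) (hCA : C ⊆ A) (hCB : C ⊆ B) {u v : V}
    (hu : u ∈ A) (hv : v ∈ B) (hu' : u ∉ C) (hv' : v ∉ C)
    (p : G.Walk u v) (hp : ∀ z ∈ C, z ∉ p.support) : False := by
  obtain ⟨hCq, hCc, xs, ys, hsepC, -⟩ := hC
  have mixed : ∀ a ∈ A, ∀ b ∈ B, CInsep G c a b := by
    intro a ha b hb D hDq hDc hsep
    obtain ⟨haD, hbD, hall⟩ := hsep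
    by_cases hCD : C ⊆ D
    · rcases hCD.ssubset_or_eq with hlt | rfl
      · have h1 : C.ncard < D.ncard := Set.ncard_lt_ncard hlt (Set.toFinite D)
        have h2 : C.ncard = c := minsep_ncard hc hatom ⟨hCq, hCc, xs, ys, hsepC,
          fun C' h1 h2 h3 => by
            by_contra hne
            exact hatom C' h2 (by
              have := Set.ncard_lt_ncard (ssubset_of_subset_of_ne h1 hne) (Set.toFinite C)
              omega) ⟨xs, ys, h3⟩⟩
        omega
      · -- D = C
        obtain ⟨p₁, hp₁⟩ := insep_reach hA.1 hCq hCc ha hu haD hu'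
        obtain ⟨p₂, hp₂⟩ := insep_reach hB.1 hCq hCc hv hb hv' hbD
        obtain ⟨z, hz, hzs⟩ := hall (p₁.append (p.append p₂))
        rw [SimpleGraph.Walk.mem_support_append_iff] at hzs
        rcases hzs with h | h
        · exact hp₁ z hz h
        · rw [SimpleGraph.Walk.mem_support_append_iff] at h
          rcases h with h | h
          · exact hp z hz h
          · exact hp₂ z hz h
    · obtain ⟨w, hwC, hwD⟩ := Set.not_subset.mp hCD
      obtain ⟨p₁, hp₁⟩ := insep_reach hA.1 hDq hDc ha (hCA hwC) haD hwD
      obtain ⟨p₂, hp₂⟩ := insep_reach hB.1 hDq hDc (hCB hwC) hb hwD hbD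
      obtain ⟨z, hz, hzs⟩ := hall (p₁.append p₂)
      rw [SimpleGraph.Walk.mem_support_append_iff] at hzs
      rcases hzs with h | h
      · exact hp₁ z hz h
      · exact hp₂ z hz h
  have hins : InsepSet G c (A ∪ B) := by
    rintro x (hx | hx) y (hy | hy)
    · exact hA.1 x hx y hy
    · exact mixed x hx y hy
    · exact fun D hq hcc hsep => mixed y hy x hx D hq hcc (sep_symm hsep)
    · exact hB.1 x hx y hy
  have hU : A ∪ B = A := hA.2 _ Set.subset_union_left hins
  have hBA : B ⊆ A := by rw [← hU]; exact Set.subset_union_right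
  exact hAB (hB.2 A hBA hA.1)

/-- The nonmin version of minimality data extraction: from two distinct minimal
separators of size `c` we can pick a vertex in one but not the other. -/
lemma exists_mem_diff [Fintype V] {C C' : Set V} (h : C'.ncard = C.ncard)
    (hne : C' ≠ C) : ∃ w ∈ C', w ∉ C := by
  by_contra hsub
  push_neg at hsub
  exact hne (Set.eq_of_subset_of_ncard_le hsub h.ge (Set.toFinite C))

lemma adj_inl {G : SimpleGraph V} {c : ℕ} {A : AtomNode G c} {y}
    (h : (TcGraph G c).Adj (Sum.inl A) y) :
    ∃ D : SepNode G c, y = Sum.inr D ∧ D.val ⊆ A.val := by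
  rcases h with ⟨A', C', h1, h2, h3⟩ | ⟨A', C', h1, h2, h3⟩
  · exact ⟨C', h2, by cases h1; exact h3⟩
  · exact absurd h1 (by simp)

lemma adj_inr {G : SimpleGraph V} {c : ℕ} {D : SepNode G c} {y}
    (h : (TcGraph G c).Adj (Sum.inr D) y) :
    ∃ B : AtomNode G c, y = Sum.inl B ∧ D.val ⊆ B.val := by
  rcases h with ⟨A', C', h1, h2, h3⟩ | ⟨A', C', h1, h2, h3⟩
  · exact absurd h1 (by simp)
  · exact ⟨A', h2, by cases h1; exact h3⟩

lemma support_dropLast_concat {W : Type*} {G' : SimpleGraph W} {a b : W} (w : G'.Walk a b) :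
    w.support.dropLast ++ [b] = w.support := by
  conv_rhs => rw [← List.dropLast_append_getLast (w.support_ne_nil)]
  simp [w.getLast_support]


/-- Walk induction along an alternating walk in `T_c(G)` ending at `Sum.inr C₀`:
if no internal separator node equals `C₀`, then from any vertex `v` of the starting
node (outside `C₀`) we can reach, by a `C₀`-avoiding walk in `G`, some vertex of an
atom `Am` on the walk which contains `C₀`; moreover `Am` occurs in the support
(in the tail if the walk is long). -/
lemma walkS [Fintype V] {G : SimpleGraph V} {c : ℕ} (hc : 1 ≤ c)
    (hatom : NoSmallCliqueSep G c) (C₀ : SepNode G c) :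
    ∀ {x e : AtomNode G c ⊕ SepNode G c} (w : (TcGraph G c).Walk x e),
    e = Sum.inr C₀ →
    (∀ D : SepNode G c, Sum.inr D ∈ w.support.dropLast → D.val ≠ C₀.val) →
    ∀ v : V, v ∉ C₀.val →
    ((∃ B : AtomNode G c, x = Sum.inl B ∧ v ∈ B.val) ∨
     (∃ D : SepNode G c, x = Sum.inr D ∧ v ∈ D.val)) →
    ∃ Am : AtomNode G c, C₀.val ⊆ Am.val ∧ Sum.inl Am ∈ w.support ∧
      (2 ≤ w.length → Sum.inl Am ∈ w.support.tail) ∧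
      ∃ u, u ∈ Am.val ∧ u ∉ C₀.val ∧ ∃ p : G.Walk v u, ∀ z ∈ C₀.val, z ∉ p.support := by
  intro x e w
  induction w with
  | nil =>
    rintro rfl _ v hv hst
    rcases hst with ⟨B, hB, -⟩ | ⟨D, hD, hvD⟩
    · exact absurd hB (by simp)
    · rw [Sum.inr.injEq] at hD
      exact absurd (hD ▸ hvD) hv
  | @cons x y _ h w' ih =>
    rintro rfl hD v hv hst
    rcases hst with ⟨B, rfl, hvB⟩ | ⟨D, rfl, hvD⟩
    · obtain ⟨D', rfl, hsub⟩ := adj_inl h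
      by_cases hval : D'.val = C₀.val
      · refine ⟨B, hval ▸ hsub, by simp [SimpleGraph.Walk.support_cons], ?_, v, hvB, hv,
          SimpleGraph.Walk.nil, by intro z hz hzs; simp at hzs; exact hv (hzs ▸ hz)⟩
        intro h2
        exfalso
        apply hD D' ?_ hval
        have h1 : 1 ≤ w'.length := by
          have := SimpleGraph.Walk.length_cons h w'
          omega
        have hne : w'.support.tail ≠ [] := by
          have := SimpleGraph.Walk.length_support w'
          intro hnil
          rw [w'.support_eq_cons] at this
          rw [hnil] at this
          simp only [List.length_cons, List.length_nil] at this
          omega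
        rw [SimpleGraph.Walk.support_cons, List.dropLast_cons_of_ne_nil w'.support_ne_nil]
        rw [w'.support_eq_cons, List.dropLast_cons_of_ne_nil hne]
        simp
      · -- internal separator differs from C₀
        have hcard : D'.val.ncard = C₀.val.ncard := by
          rw [minsep_ncard hc hatom D'.prop, minsep_ncard hc hatom C₀.prop]
        obtain ⟨w₀, hw₀D, hw₀C⟩ := exists_mem_diff hcard hval
        obtain ⟨p₁, hp₁⟩ := insep_reach B.prop.1 C₀.prop.1 C₀.prop.2.1 hvB (hsub hw₀D) hv hw₀C
        have hD' : ∀ D : SepNode G c, Sum.inr D ∈ w'.support.dropLast → D.val ≠ C₀.val := by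
          intro D hmem
          apply hD D
          rw [SimpleGraph.Walk.support_cons, List.dropLast_cons_of_ne_nil w'.support_ne_nil]
          exact List.mem_cons_of_mem _ hmem
        obtain ⟨Am, h1, h2, h3, u, h4, h5, p₂, hp₂⟩ := ih rfl hD' w₀ hw₀C (Or.inr ⟨D', rfl, hw₀D⟩)
        refine ⟨Am, h1, ?_, ?_, u, h4, h5, p₁.append p₂, ?_⟩
        · rw [SimpleGraph.Walk.support_cons]
          exact List.mem_cons_of_mem _ h2
        · intro _
          rw [SimpleGraph.Walk.support_cons]
          exact h2
        · intro z hz hzs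
          rw [SimpleGraph.Walk.mem_support_append_iff] at hzs
          rcases hzs with hh | hh
          · exact hp₁ z hz hh
          · exact hp₂ z hz hh
    · obtain ⟨B', rfl, hsub⟩ := adj_inr h
      have hD' : ∀ D : SepNode G c, Sum.inr D ∈ w'.support.dropLast → D.val ≠ C₀.val := by
        intro D hmem
        apply hD D
        rw [SimpleGraph.Walk.support_cons, List.dropLast_cons_of_ne_nil w'.support_ne_nil]
        exact List.mem_cons_of_mem _ hmem
      obtain ⟨Am, h1, h2, h3, u, h4, h5, p₂, hp₂⟩ := ih rfl hD' v hv (Or.inl ⟨B', rfl, hsub hvD⟩)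
      refine ⟨Am, h1, ?_, ?_, u, h4, h5, p₂, hp₂⟩
      · rw [SimpleGraph.Walk.support_cons]
        exact List.mem_cons_of_mem _ h2
      · intro _
        rw [SimpleGraph.Walk.support_cons]
        exact h2


/-- No cycle of `T_c(G)` passes through a separator node. -/
lemma noCycle [Fintype V] {G : SimpleGraph V} {c : ℕ} (hc : 1 ≤ c)
    (hatom : NoSmallCliqueSep G c) (C₀ : SepNode G c)
    (p : (TcGraph G c).Walk (Sum.inr C₀) (Sum.inr C₀)) (hp : p.IsCycle) : False := by
  cases p with
  | nil => exact hp.ne_nil rfl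
  | @cons _ y _ h q =>
    obtain ⟨A1, rfl, hsubA1⟩ := adj_inr h
    have hnodup : q.support.Nodup := by
      have := hp.2
      rwa [SimpleGraph.Walk.support_cons, List.tail_cons] at this
    have hdrop : ∀ D : SepNode G c, Sum.inr D ∈ q.support.dropLast → D.val ≠ C₀.val := by
      intro D hmem hval
      have hDC : D = C₀ := Subtype.ext hval
      subst hDC
      have heq : q.support.dropLast ++ [Sum.inr D] = q.support := support_dropLast_concat q
      rw [← heq] at hnodup
      exact (List.disjoint_of_nodup_append hnodup) hmem (List.mem_singleton.mpr rfl)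
    have hlen3 : 3 ≤ q.length + 1 := by
      have := hp.three_le_length
      rwa [SimpleGraph.Walk.length_cons] at this
    by_cases hA1C : ∃ v, v ∈ A1.val ∧ v ∉ C₀.val
    · obtain ⟨v, hv1, hv0⟩ := hA1C
      obtain ⟨Am, hAmC, -, htail, u, huAm, huC, pw, hpw⟩ :=
        walkS hc hatom C₀ q rfl hdrop v hv0 (Or.inl ⟨A1, rfl, hv1⟩)
      have hmem := htail (by omega)
      have hne : Am ≠ A1 := by
        rintro rfl
        have hcons : q.support = Sum.inl Am :: q.support.tail := q.support_eq_cons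
        rw [hcons] at hnodup
        exact (List.nodup_cons.mp hnodup).1 hmem
      exact sidesep hc hatom A1.prop Am.prop C₀.prop
        (fun hvv => hne (Subtype.ext hvv.symm)) hsubA1 hAmC hv1 huAm hv0 huC pw hpw
    · push_neg at hA1C
      cases q with
      | @cons _ y' _ h' q' =>
        obtain ⟨D1, rfl, hsubD1⟩ := adj_inl h'
        have hval : D1.val = C₀.val := by
          apply Set.eq_of_subset_of_ncard_le (fun z hz => hA1C z (hsubD1 hz))
          rw [minsep_ncard hc hatom D1.prop, minsep_ncard hc hatom C₀.prop]
        apply hdrop D1 ?_ hval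
        have hq'len : 1 ≤ q'.length := by
          rw [SimpleGraph.Walk.length_cons] at hlen3; omega
        have hne : q'.support.tail ≠ [] := by
          have := SimpleGraph.Walk.length_support q'
          intro hnil
          rw [q'.support_eq_cons, hnil] at this
          simp only [List.length_cons, List.length_nil] at this
          omega
        rw [SimpleGraph.Walk.support_cons,
          List.dropLast_cons_of_ne_nil q'.support_ne_nil]
        rw [q'.support_eq_cons, List.dropLast_cons_of_ne_nil hne]
        simp

/-- Along any path `A₁, C₁, A₂, …, C_{t-1}, A_t` in `T_c(G)` (with distinct atoms
and distinct separators, consecutive ones incident), every atom `A_i` with `i ≥ 2`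
avoids `A₁ \ A₂`; consequently `T_c(G)` is acyclic. -/
theorem stmt12 [Fintype V] (G : SimpleGraph V) (c : ℕ) (hc : 1 ≤ c)
    (hconn : G.Connected) (hatom : NoSmallCliqueSep G c) :
    (∀ (t : ℕ) (ht : 1 ≤ t) (A : Fin (t + 1) → AtomNode G c) (C : Fin t → SepNode G c),
      Function.Injective A → Function.Injective C →
      (∀ i : Fin t, (C i).val ⊆ (A i.castSucc).val ∧ (C i).val ⊆ (A i.succ).val) →
      ∀ i : Fin (t + 1), i ≠ 0 →
        (A i).val ∩ ((A 0).val \ (A ⟨1, by omega⟩).val) = ∅) ∧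
    (TcGraph G c).IsAcyclic := by
  constructor
  · intro t ht A C injA injC hinc i hi
    set C₀ := C ⟨0, by omega⟩ with hC₀def
    have hCsub1 : C₀.val ⊆ (A ⟨1, by omega⟩).val := (hinc ⟨0, by omega⟩).2
    have hCsub0 : C₀.val ⊆ (A 0).val := by
      have h0 : ((⟨0, by omega⟩ : Fin t).castSucc : Fin (t+1)) = 0 := by
        simp [Fin.ext_iff]
      have := (hinc ⟨0, by omega⟩).1
      rwa [h0] at this
    have chain : ∀ j (h1 : 1 ≤ j) (hjt : j ≤ t), ∀ v, v ∈ (A ⟨j, by omega⟩).val →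
        v ∉ C₀.val →
        ∃ u, u ∈ (A ⟨1, by omega⟩).val ∧ u ∉ C₀.val ∧
          ∃ p : G.Walk v u, ∀ z ∈ C₀.val, z ∉ p.support := by
      intro j
      induction j with
      | zero => omega
      | succ n ihn =>
        intro h1 hjt v hv hv0
        by_cases hn : n = 0
        · subst hn
          refine ⟨v, hv, hv0, SimpleGraph.Walk.nil, ?_⟩
          intro z hz hzs
          simp only [SimpleGraph.Walk.support_nil, List.mem_singleton] at hzs
          exact hv0 (hzs ▸ hz)
        · have hn1 : 1 ≤ n := by omega
          set Cn := C ⟨n, by omega⟩ with hCndef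
          have hne : Cn.val ≠ C₀.val := by
            intro hvv
            have := injC (Subtype.ext hvv)
            simp [Fin.ext_iff] at this
            omega
          have hcard : Cn.val.ncard = C₀.val.ncard := by
            rw [minsep_ncard hc hatom Cn.prop, minsep_ncard hc hatom C₀.prop]
          obtain ⟨w, hwC, hwC0⟩ := exists_mem_diff hcard hne
          have hwA1 : w ∈ (A ⟨n+1, by omega⟩).val := (hinc ⟨n, by omega⟩).2 hwC
          have hwA : w ∈ (A ⟨n, by omega⟩).val := by
            have := (hinc ⟨n, by omega⟩).1 hwC
            have e : ((⟨n, by omega⟩ : Fin t).castSucc : Fin (t+1)) =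
                ⟨n, by omega⟩ := by
              simp [Fin.ext_iff]
            rwa [e] at this
          obtain ⟨p₁, hp₁⟩ := insep_reach (A ⟨n+1, by omega⟩).prop.1 C₀.prop.1
            C₀.prop.2.1 hv hwA1 hv0 hwC0
          obtain ⟨u, hu1, hu0, p₂, hp₂⟩ := ihn hn1 (by omega) w hwA hwC0
          refine ⟨u, hu1, hu0, p₁.append p₂, ?_⟩
          intro z hz hzs
          rw [SimpleGraph.Walk.mem_support_append_iff] at hzs
          rcases hzs with hh | hh
          · exact hp₁ z hz hh
          · exact hp₂ z hz hh
    rw [Set.eq_empty_iff_forall_notMem]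
    rintro x ⟨hxi, hx0, hx1⟩
    have hx0' : x ∉ C₀.val := fun hxc => hx1 (hCsub1 hxc)
    have h1i : 1 ≤ i.val := by
      rcases Nat.eq_zero_or_pos i.val with h | h
      · exact absurd (Fin.ext (by simpa using h)) hi
      · omega
    have hxi2 : x ∈ (A ⟨i.val, by omega⟩).val := by
      have e : (⟨i.val, by omega⟩ : Fin (t+1)) = i := by
        simp [Fin.ext_iff]
      rwa [e]
    obtain ⟨u, hu1, hu0, p, hp⟩ := chain i.val h1i (by omega) x hxi2 hx0'
    refine sidesep hc hatom (A 0).prop (A ⟨1, by omega⟩).prop C₀.prop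
      ?_ hCsub0 hCsub1 hx0 hu1 hx0' hu0 p hp
    intro hvv
    have := injA (Subtype.ext hvv)
    simp [Fin.ext_iff] at this
  · letI : DecidableEq (AtomNode G c ⊕ SepNode G c) := Classical.decEq _
    intro v p hp
    cases v with
    | inr C₀ => exact noCycle hc hatom C₀ p hp
    | inl A0 =>
      cases p with
      | nil => exact hp.ne_nil rfl
      | @cons _ y _ h q =>
        obtain ⟨D, rfl, -⟩ := adj_inl h
        have hmem : Sum.inr D ∈ (SimpleGraph.Walk.cons h q).support := by
          rw [SimpleGraph.Walk.support_cons]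
          exact List.mem_cons_of_mem _ q.start_mem_support
        exact noCycle hc hatom D _ (hp.rotate hmem)
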